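/- Let h be a uniformly random linear map 𝔽₂^u → 𝔽₂^ℓ with u ≥ ℓ, and let K denote the dimension of the kernel of h. Then E[2^K] ≤ 2^{u-ℓ} + 1, and consequently Pr[h is not surjective] = Pr[K ≥ u - ℓ + 1] ≤ 2^{-(u-ℓ)}. -/

import Mathlib

open Finset Module

attribute [local instance] Fintype.ofFinite

namespace Stmt19Aux

variable {u ℓ : ℕ}

/-- `M ↦ M.mulVec v` as a linear map in `M`. -/
def phi (v : Fin u → ZMod 2) :
    Matrix (Fin ℓ) (Fin u) (ZMod 2) →ₗ[ZMod 2] (Fin ℓ → ZMod 2) where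
  toFun M := M.mulVec v
  map_add' A B := Matrix.add_mulVec A B v
  map_smul' c A := by simp [Matrix.smul_mulVec]

lemma zmod2_ne_zero : ∀ {x : ZMod 2}, x ≠ 0 → x = 1 := by decide

lemma phi_surj {v : Fin u → ZMod 2} (hv : v ≠ 0) :
    Function.Surjective (phi (ℓ := ℓ) v) := by
  obtain ⟨i, hi⟩ : ∃ i, v i ≠ 0 := by
    by_contra h
    push_neg at h
    exact hv (funext fun i => h i)
  intro w
  refine ⟨Matrix.of (fun j k => if k = i then w j else 0), ?_⟩
  funext j
  simp only [phi, LinearMap.coe_mk, AddHom.coe_mk, Matrix.mulVec, dotProduct,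
    Matrix.of_apply]
  rw [Finset.sum_congr rfl (fun k _ => by rw [ite_mul, zero_mul]),
    Finset.sum_ite_eq' univ i (fun k => w j * v k)]
  simp [zmod2_ne_zero hi]

lemma nat_card_ker_phi {v : Fin u → ZMod 2} (hv : v ≠ 0) :
    Nat.card (LinearMap.ker (phi (ℓ := ℓ) v)) = 2 ^ (ℓ * u - ℓ) := by
  have h1 : finrank (ZMod 2) (LinearMap.range (phi (ℓ := ℓ) v))
      + finrank (ZMod 2) (LinearMap.ker (phi (ℓ := ℓ) v))
      = finrank (ZMod 2) (Matrix (Fin ℓ) (Fin u) (ZMod 2)) :=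
    LinearMap.finrank_range_add_finrank_ker _
  have h2 : LinearMap.range (phi (ℓ := ℓ) v) = ⊤ :=
    LinearMap.range_eq_top.mpr (phi_surj hv)
  rw [h2, finrank_top, Module.finrank_matrix,
    Module.finrank_fintype_fun_eq_card] at h1
  simp only [Fintype.card_fin, Module.finrank_self, mul_one] at h1
  have hk : finrank (ZMod 2) (LinearMap.ker (phi (ℓ := ℓ) v)) = ℓ * u - ℓ := by omega
  rw [Nat.card_eq_fintype_card, card_eq_pow_finrank (K := ZMod 2), ZMod.card, hk]

/-- Number of matrices mapping a fixed nonzero `v` to `0`. -/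
lemma count_matrices {v : Fin u → ZMod 2} (hv : v ≠ 0) :
    (univ.filter (fun M : Matrix (Fin ℓ) (Fin u) (ZMod 2) => M.mulVec v = 0)).card
      = 2 ^ (ℓ * u - ℓ) := by
  rw [← nat_card_ker_phi (ℓ := ℓ) hv]
  have : Nat.card (LinearMap.ker (phi (ℓ := ℓ) v))
      = Nat.card {M : Matrix (Fin ℓ) (Fin u) (ZMod 2) // M.mulVec v = 0} :=
    Nat.card_congr (Equiv.subtypeEquivRight (fun M => by
      simp [LinearMap.mem_ker, phi]))
  rw [this, Nat.card_eq_fintype_card, Fintype.card_subtype]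

/-- `2^K` equals the number of kernel vectors. -/
lemma two_pow_finrank_ker (M : Matrix (Fin ℓ) (Fin u) (ZMod 2)) :
    2 ^ finrank (ZMod 2) (LinearMap.ker M.mulVecLin)
      = (univ.filter (fun v : Fin u → ZMod 2 => M.mulVec v = 0)).card := by
  have h1 : Nat.card (LinearMap.ker M.mulVecLin)
      = 2 ^ finrank (ZMod 2) (LinearMap.ker M.mulVecLin) := by
    rw [Nat.card_eq_fintype_card, card_eq_pow_finrank (K := ZMod 2), ZMod.card]
  have h2 : Nat.card (LinearMap.ker M.mulVecLin)
      = Nat.card {v : Fin u → ZMod 2 // M.mulVec v = 0} :=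
    Nat.card_congr (Equiv.subtypeEquivRight (fun v => by
      simp [LinearMap.mem_ker]))
  rw [← h1, h2, Nat.card_eq_fintype_card, Fintype.card_subtype]

lemma rank_nullity (M : Matrix (Fin ℓ) (Fin u) (ZMod 2)) :
    finrank (ZMod 2) (LinearMap.range M.mulVecLin)
      + finrank (ZMod 2) (LinearMap.ker M.mulVecLin) = u := by
  have := LinearMap.finrank_range_add_finrank_ker M.mulVecLin
  rwa [Module.finrank_fintype_fun_eq_card, Fintype.card_fin] at this

lemma range_le (M : Matrix (Fin ℓ) (Fin u) (ZMod 2)) :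
    finrank (ZMod 2) (LinearMap.range M.mulVecLin) ≤ ℓ := by
  have := Submodule.finrank_le (LinearMap.range M.mulVecLin)
  rwa [Module.finrank_fintype_fun_eq_card, Fintype.card_fin] at this

lemma ker_ge (M : Matrix (Fin ℓ) (Fin u) (ZMod 2)) :
    u - ℓ ≤ finrank (ZMod 2) (LinearMap.ker M.mulVecLin) := by
  have h1 := rank_nullity M
  have h2 := range_le M
  omega

lemma not_surj_iff (M : Matrix (Fin ℓ) (Fin u) (ZMod 2)) (hu : ℓ ≤ u) :
    ¬ Function.Surjective M.mulVec ↔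
      u - ℓ + 1 ≤ finrank (ZMod 2) (LinearMap.ker M.mulVecLin) := by
  have h1 := rank_nullity M
  have h2 := range_le M
  have hsurj : Function.Surjective M.mulVec ↔
      finrank (ZMod 2) (LinearMap.range M.mulVecLin) = ℓ := by
    constructor
    · intro h
      have : LinearMap.range M.mulVecLin = ⊤ := LinearMap.range_eq_top.mpr (by
        intro w; obtain ⟨x, hx⟩ := h w; exact ⟨x, by simpa using hx⟩)
      rw [this, finrank_top, Module.finrank_fintype_fun_eq_card, Fintype.card_fin]
    · intro h
      have : LinearMap.range M.mulVecLin = ⊤ := by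
        apply Submodule.eq_top_of_finrank_eq
        rw [h, Module.finrank_fintype_fun_eq_card, Fintype.card_fin]
      intro w
      have : w ∈ LinearMap.range M.mulVecLin := this ▸ Submodule.mem_top
      obtain ⟨x, hx⟩ := this
      exact ⟨x, by simpa using hx⟩
  rw [hsurj]
  omega

end Stmt19Aux

open Stmt19Aux in
theorem stmt_19 (u ℓ : ℕ) (hu : ℓ ≤ u) :
    ((∑ M : Matrix (Fin ℓ) (Fin u) (ZMod 2),
        (2 : ℝ) ^ Module.finrank (ZMod 2) (LinearMap.ker M.mulVecLin))
      / (Fintype.card (Matrix (Fin ℓ) (Fin u) (ZMod 2)) : ℝ) ≤ 2 ^ (u - ℓ) + 1) ∧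
    ({M : Matrix (Fin ℓ) (Fin u) (ZMod 2) | ¬ Function.Surjective M.mulVec}.ncard
      = {M : Matrix (Fin ℓ) (Fin u) (ZMod 2) |
          u - ℓ + 1 ≤ Module.finrank (ZMod 2) (LinearMap.ker M.mulVecLin)}.ncard) ∧
    (({M : Matrix (Fin ℓ) (Fin u) (ZMod 2) | ¬ Function.Surjective M.mulVec}.ncard : ℝ)
      / (Fintype.card (Matrix (Fin ℓ) (Fin u) (ZMod 2)) : ℝ) ≤ 1 / 2 ^ (u - ℓ)) := by
  classical
  have hNval : Fintype.card (Matrix (Fin ℓ) (Fin u) (ZMod 2)) = 2 ^ (ℓ * u) := by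
    simp [Matrix, Fintype.card_fun, ← pow_mul, Nat.mul_comm]
    exact Fintype.card_eq_nat_card.trans (by simp [Nat.card_fun, ← pow_mul])
  -- key exponent inequality
  have hexp : 2 ^ u * 2 ^ (ℓ * u - ℓ) ≤ 2 ^ (u - ℓ) * 2 ^ (ℓ * u) := by
    rcases Nat.eq_zero_or_pos u with h | h
    · have hl : ℓ = 0 := by omega
      subst h; subst hl; norm_num
    · rw [← pow_add, ← pow_add]
      apply Nat.pow_le_pow_right (by norm_num)
      have : ℓ ≤ ℓ * u := Nat.le_mul_of_pos_right ℓ h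
      omega
  -- the ℕ sum bound
  have hsumN : (∑ M : Matrix (Fin ℓ) (Fin u) (ZMod 2),
      2 ^ Module.finrank (ZMod 2) (LinearMap.ker M.mulVecLin))
      ≤ 2 ^ (u - ℓ) * 2 ^ (ℓ * u) + 2 ^ (ℓ * u) := by
    have step1 : (∑ M : Matrix (Fin ℓ) (Fin u) (ZMod 2),
        2 ^ Module.finrank (ZMod 2) (LinearMap.ker M.mulVecLin))
        = ∑ v : Fin u → ZMod 2,
          (Finset.univ.filter
            (fun M : Matrix (Fin ℓ) (Fin u) (ZMod 2) => M.mulVec v = 0)).card := by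
      calc (∑ M : Matrix (Fin ℓ) (Fin u) (ZMod 2),
            2 ^ Module.finrank (ZMod 2) (LinearMap.ker M.mulVecLin))
          = ∑ M : Matrix (Fin ℓ) (Fin u) (ZMod 2),
            (Finset.univ.filter (fun v : Fin u → ZMod 2 => M.mulVec v = 0)).card :=
            Finset.sum_congr rfl (fun M _ => two_pow_finrank_ker M)
        _ = ∑ v : Fin u → ZMod 2,
            (Finset.univ.filter
              (fun M : Matrix (Fin ℓ) (Fin u) (ZMod 2) => M.mulVec v = 0)).card := by
            simp only [Finset.card_filter]
            exact Finset.sum_comm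
    rw [step1, ← Finset.add_sum_erase _ _ (Finset.mem_univ (0 : Fin u → ZMod 2))]
    have h0X : (Finset.univ.filter
        (fun M : Matrix (Fin ℓ) (Fin u) (ZMod 2) => M.mulVec 0 = 0)).card
        = 2 ^ (ℓ * u) := by
      rw [Finset.filter_true_of_mem (fun M _ => Matrix.mulVec_zero M), Finset.card_univ, hNval]
    rw [h0X]
    have herase : (∑ v ∈ Finset.univ.erase (0 : Fin u → ZMod 2),
        (Finset.univ.filter
          (fun M : Matrix (Fin ℓ) (Fin u) (ZMod 2) => M.mulVec v = 0)).card)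
        ≤ 2 ^ u * 2 ^ (ℓ * u - ℓ) := by
      have : ∀ v ∈ Finset.univ.erase (0 : Fin u → ZMod 2),
          (Finset.univ.filter
            (fun M : Matrix (Fin ℓ) (Fin u) (ZMod 2) => M.mulVec v = 0)).card
          = 2 ^ (ℓ * u - ℓ) := fun v hv =>
        count_matrices (Finset.ne_of_mem_erase hv)
      rw [Finset.sum_congr rfl this, Finset.sum_const, smul_eq_mul]
      have : (Finset.univ.erase (0 : Fin u → ZMod 2)).card ≤ 2 ^ u := by
        calc (Finset.univ.erase (0 : Fin u → ZMod 2)).card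
            ≤ Finset.univ.card := Finset.card_erase_le.trans (le_refl _)
          _ = 2 ^ u := by simp [Fintype.card_fun]
      exact Nat.mul_le_mul_right _ this
    calc 2 ^ (ℓ * u) + _ ≤ 2 ^ (ℓ * u) + 2 ^ u * 2 ^ (ℓ * u - ℓ) := by
          exact Nat.add_le_add_left herase _
      _ ≤ 2 ^ (ℓ * u) + 2 ^ (u - ℓ) * 2 ^ (ℓ * u) := Nat.add_le_add_left hexp _
      _ = 2 ^ (u - ℓ) * 2 ^ (ℓ * u) + 2 ^ (ℓ * u) := by ring
  -- real versions
  have hNpos : (0 : ℝ) < (Fintype.card (Matrix (Fin ℓ) (Fin u) (ZMod 2)) : ℝ) := by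
    exact_mod_cast Fintype.card_pos
  have hsumR : (∑ M : Matrix (Fin ℓ) (Fin u) (ZMod 2),
      (2 : ℝ) ^ Module.finrank (ZMod 2) (LinearMap.ker M.mulVecLin))
      ≤ (2 : ℝ) ^ (u - ℓ) * (Fintype.card (Matrix (Fin ℓ) (Fin u) (ZMod 2)) : ℝ)
        + (Fintype.card (Matrix (Fin ℓ) (Fin u) (ZMod 2)) : ℝ) := by
    rw [hNval]
    calc (∑ M : Matrix (Fin ℓ) (Fin u) (ZMod 2),
          (2 : ℝ) ^ Module.finrank (ZMod 2) (LinearMap.ker M.mulVecLin))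
        = ((∑ M : Matrix (Fin ℓ) (Fin u) (ZMod 2),
            2 ^ Module.finrank (ZMod 2) (LinearMap.ker M.mulVecLin) : ℕ) : ℝ) := by
          push_cast; rfl
      _ ≤ ((2 ^ (u - ℓ) * 2 ^ (ℓ * u) + 2 ^ (ℓ * u) : ℕ) : ℝ) := by exact_mod_cast hsumN
      _ = (2 : ℝ) ^ (u - ℓ) * ((2 ^ (ℓ * u) : ℕ) : ℝ) + ((2 ^ (ℓ * u) : ℕ) : ℝ) := by
          push_cast; ring
  refine ⟨?_, ?_, ?_⟩
  · rw [div_le_iff₀ hNpos]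
    calc (∑ M : Matrix (Fin ℓ) (Fin u) (ZMod 2),
          (2 : ℝ) ^ Module.finrank (ZMod 2) (LinearMap.ker M.mulVecLin))
        ≤ _ := hsumR
      _ = ((2:ℝ) ^ (u - ℓ) + 1) * (Fintype.card (Matrix (Fin ℓ) (Fin u) (ZMod 2)) : ℝ) := by
          ring
  · congr 1
    ext M
    exact not_surj_iff M hu
  · -- Markov step
    set badF : Finset (Matrix (Fin ℓ) (Fin u) (ZMod 2)) :=
      Finset.univ.filter (fun M => ¬ Function.Surjective M.mulVec) with hbadF
    have hncard : ({M : Matrix (Fin ℓ) (Fin u) (ZMod 2) |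
        ¬ Function.Surjective M.mulVec}.ncard) = badF.card := by
      rw [Set.ncard_eq_toFinset_card']
      congr 1
      simp [hbadF, Set.toFinset_setOf]
    have hterm : ∀ M ∈ badF,
        (2 : ℝ) ^ (u - ℓ) ≤ (2 : ℝ) ^ Module.finrank (ZMod 2) (LinearMap.ker M.mulVecLin)
          - (2 : ℝ) ^ (u - ℓ) := by
      intro M hM
      rw [hbadF, Finset.mem_filter] at hM
      have hK := (not_surj_iff M hu).mp hM.2
      have : (2 : ℝ) ^ (u - ℓ + 1)
          ≤ (2 : ℝ) ^ Module.finrank (ZMod 2) (LinearMap.ker M.mulVecLin) :=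
        pow_le_pow_right₀ one_le_two hK
      rw [pow_succ] at this
      linarith
    have hterm2 : ∀ M : Matrix (Fin ℓ) (Fin u) (ZMod 2),
        (0 : ℝ) ≤ (2 : ℝ) ^ Module.finrank (ZMod 2) (LinearMap.ker M.mulVecLin)
          - (2 : ℝ) ^ (u - ℓ) := by
      intro M
      have : (2 : ℝ) ^ (u - ℓ)
          ≤ (2 : ℝ) ^ Module.finrank (ZMod 2) (LinearMap.ker M.mulVecLin) :=
        pow_le_pow_right₀ one_le_two (ker_ge M)
      linarith
    have hkey : (badF.card : ℝ) * 2 ^ (u - ℓ)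
        ≤ (Fintype.card (Matrix (Fin ℓ) (Fin u) (ZMod 2)) : ℝ) := by
      calc (badF.card : ℝ) * 2 ^ (u - ℓ)
          = ∑ _M ∈ badF, (2 : ℝ) ^ (u - ℓ) := by rw [Finset.sum_const, nsmul_eq_mul]
        _ ≤ ∑ M ∈ badF, ((2 : ℝ) ^ Module.finrank (ZMod 2) (LinearMap.ker M.mulVecLin)
              - (2 : ℝ) ^ (u - ℓ)) := Finset.sum_le_sum hterm
        _ ≤ ∑ M : Matrix (Fin ℓ) (Fin u) (ZMod 2),
              ((2 : ℝ) ^ Module.finrank (ZMod 2) (LinearMap.ker M.mulVecLin)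
              - (2 : ℝ) ^ (u - ℓ)) :=
            Finset.sum_le_sum_of_subset_of_nonneg (Finset.subset_univ _)
              (fun M _ _ => hterm2 M)
        _ = (∑ M : Matrix (Fin ℓ) (Fin u) (ZMod 2),
              (2 : ℝ) ^ Module.finrank (ZMod 2) (LinearMap.ker M.mulVecLin))
            - (Fintype.card (Matrix (Fin ℓ) (Fin u) (ZMod 2)) : ℝ) * 2 ^ (u - ℓ) := by
            rw [Finset.sum_sub_distrib, Finset.sum_const, Finset.card_univ, nsmul_eq_mul]
        _ ≤ (Fintype.card (Matrix (Fin ℓ) (Fin u) (ZMod 2)) : ℝ) := by linarith [hsumR]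
    rw [hncard]
    rw [div_le_div_iff₀ hNpos (by positivity)]
    linarith [hkey]
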